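/- Let u, v be (possibly countably infinite) index sets and let A be a u × v rational matrix with finitely many nonzero entries per row that is weakly image partition regular over ℚ. Then there exist a set T ⊆ u with |T| ≤ |v| and a u × T rational matrix D that is image partition regular over ℚ such that {A x : x ∈ ℚ^v} ∩ (ℚ \ {0})^u = {D y : y ∈ (ℚ \ {0})^T} ∩ (ℚ \ {0})^u. -/

import Mathlib

open scoped BigOperators

/-- Matrix–vector product over ℚ, via `finsum`. -/
noncomputable def mulVecQ {u v : Type} (A : u → v → ℚ) (x : v → ℚ) : u → ℚ :=
  fun i => ∑ᶠ j, A i j * x j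

/-- `A` is weakly image partition regular over ℚ. -/
def WIPRoverQ {u v : Type} (A : u → v → ℚ) : Prop :=
  ∀ (k : ℕ) (φ : ℚ → Fin k), ∃ x : v → ℚ,
    (∀ i, mulVecQ A x i ≠ 0) ∧
    (∀ i i', φ (mulVecQ A x i) = φ (mulVecQ A x i'))

/-- `D` is image partition regular over ℚ. -/
def IPRoverQ {u v : Type} (D : u → v → ℚ) : Prop :=
  ∀ (k : ℕ) (φ : ℚ → Fin k), ∃ y : v → ℚ,
    (∀ j, y j ≠ 0) ∧ (∀ i, mulVecQ D y i ≠ 0) ∧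
    (∀ i i', φ (mulVecQ D y i) = φ (mulVecQ D y i'))

/-- for a row-finite `u × v` rational matrix `A` (`u, v` at most
countable) weakly image partition regular over ℚ, there exist `T ⊆ u` with
`|T| ≤ |v|` and a `u × T` rational matrix `D` (row-finite), image partition
regular over ℚ, with
`{A x : x ∈ ℚ^v} ∩ (ℚ\{0})^u = {D y : y ∈ (ℚ\{0})^T} ∩ (ℚ\{0})^u`. -/
lemma finsum_mul_finsupp {α : Type} (f : α →₀ ℚ) (z : α → ℚ) :
    ∑ᶠ j, f j * z j = f.sum fun j a => a * z j := by
  rw [finsum_eq_sum_of_support_subset (f := fun j => f j * z j) (s := f.support)]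
  · rfl
  · intro j hj
    simp only [Function.mem_support, Finset.coe_sort_coe, Finset.mem_coe,
      Finsupp.mem_support_iff] at *
    exact fun h => hj (by rw [h, zero_mul])

theorem stmt13 {u v : Type} [Countable u] [Countable v]
    (A : u → v → ℚ) (hA : ∀ i, (Function.support (A i)).Finite)
    (hwipr : WIPRoverQ A) :
    ∃ (T : Set u) (D : u → T → ℚ),
      Cardinal.mk T ≤ Cardinal.mk v ∧
      (∀ i, (Function.support (D i)).Finite) ∧
      IPRoverQ D ∧
      ({y : u → ℚ | ∃ x : v → ℚ, y = mulVecQ A x} ∩ {y : u → ℚ | ∀ i, y i ≠ 0} =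
        {y : u → ℚ | ∃ z : T → ℚ, (∀ t, z t ≠ 0) ∧ y = mulVecQ D z} ∩
          {y : u → ℚ | ∀ i, y i ≠ 0}) := by
  classical
  set r : u → (v →₀ ℚ) := fun i => Finsupp.ofSupportFinite (A i) (hA i) with hrdef
  have hmul : ∀ (x : v → ℚ) i, mulVecQ A x i = Finsupp.linearCombination ℚ x (r i) := by
    intro x i
    rw [Finsupp.linearCombination_apply]
    show ∑ᶠ j, (r i) j * x j = _
    rw [finsum_mul_finsupp]
    simp [smul_eq_mul]
  obtain ⟨s, hs_sub, hs_span, hs_ind⟩ := exists_linearIndependent ℚ (Set.range r)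
  have hτ : ∀ σ : s, ∃ i, r i = σ := fun σ => hs_sub σ.2
  choose τ hτ using hτ
  have hτinj : Function.Injective τ := fun a b hab =>
    Subtype.ext (by rw [← hτ a, ← hτ b, hab])
  set T : Set u := Set.range τ with hTdef
  set e : T ≃ s := (Equiv.ofInjective τ hτinj).symm with hedef
  have hτe : ∀ t : T, τ (e t) = (t : u) := fun t =>
    Equiv.apply_ofInjective_symm hτinj t
  have hrt : ∀ t : T, r (t : u) = ((e t : s) : v →₀ ℚ) := by
    intro t
    rw [← hτe t, hτ (e t)]
  -- coefficients
  have hc : ∀ i, ∃ c : s →₀ ℚ, (c.sum fun σ a => a • (σ : v →₀ ℚ)) = r i := by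
    intro i
    rw [← Finsupp.mem_span_range_iff_exists_finsupp]
    rw [Subtype.range_coe, hs_span]
    exact Submodule.subset_span (Set.mem_range_self i)
  choose c hc using hc
  set D : u → T → ℚ := fun i t => c i (e t) with hDdef
  have hDfin : ∀ i, (Function.support (D i)).Finite := by
    intro i
    refine Set.Finite.subset (((c i).support.finite_toSet).preimage
      (e.injective.injOn)) ?_
    intro t ht
    simp only [Function.mem_support, hDdef] at ht
    simpa using ht
  -- mulVecQ D formula
  have hmulD : ∀ (z : T → ℚ) i,
      mulVecQ D z i = (c i).sum fun σ a => a * z ⟨τ σ, Set.mem_range_self σ⟩ := by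
    intro z i
    have hz : ∀ t : T, D i t * z t =
        (fun σ : s => c i σ * z ⟨τ σ, Set.mem_range_self σ⟩) (e t) := by
      intro t
      simp only [hDdef]
      congr 1
      congr 1
      exact Subtype.ext (hτe t).symm
    show ∑ᶠ t, D i t * z t = _
    rw [finsum_congr hz,
      finsum_comp_equiv e (f := fun σ : s => c i σ * z ⟨τ σ, Set.mem_range_self σ⟩)]
    exact finsum_mul_finsupp (c i) _
  -- key identity through linear functionals
  have hkey : ∀ (g : (v →₀ ℚ) →ₗ[ℚ] ℚ) i,
      mulVecQ D (fun t => g (r t)) i = g (r i) := by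
    intro g i
    rw [hmulD, ← hc i, map_finsuppSum]
    refine Finsupp.sum_congr fun σ _ => ?_
    rw [map_smul, smul_eq_mul, hτ σ]
  have key1 : ∀ (x : v → ℚ) i,
      mulVecQ D (fun t => mulVecQ A x t) i = mulVecQ A x i := by
    intro x i
    have : (fun t : T => mulVecQ A x t) =
        fun t : T => Finsupp.linearCombination ℚ x (r t) := by
      funext t; exact hmul x t
    rw [this, hkey, ← hmul]
  -- cardinality
  have hcard : Cardinal.mk T ≤ Cardinal.mk v := by
    have h1 := hs_ind.cardinal_le_rank
    rw [rank_finsupp_self'] at h1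
    exact (Cardinal.mk_congr e).le.trans h1
  -- IPR
  have hIPR : IPRoverQ D := by
    intro k φ
    obtain ⟨x, hx0, hxmono⟩ := hwipr k φ
    refine ⟨fun t => mulVecQ A x t, fun t => hx0 t, ?_, ?_⟩
    · intro i; rw [key1]; exact hx0 i
    · intro i i'; rw [key1, key1]; exact hxmono i i'
  refine ⟨T, D, hcard, hDfin, hIPR, ?_⟩
  ext y
  simp only [Set.mem_inter_iff, Set.mem_setOf_eq]
  constructor
  · rintro ⟨⟨x, rfl⟩, hy0⟩
    exact ⟨⟨fun t => mulVecQ A x t, fun t => hy0 t,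
      funext fun i => (key1 x i).symm⟩, hy0⟩
  · rintro ⟨⟨z, hz0, rfl⟩, hy0⟩
    refine ⟨?_, hy0⟩
    -- construct x
    set B := Module.Basis.extend hs_ind with hBdef
    set val : LinearIndepOn.extend (v := id) hs_ind (Set.subset_univ s) → ℚ := fun w =>
      if h : (w : v →₀ ℚ) ∈ s then z ⟨τ ⟨(w : v →₀ ℚ), h⟩, Set.mem_range_self _⟩ else 0
      with hvaldef
    set g : (v →₀ ℚ) →ₗ[ℚ] ℚ := B.constr ℚ val with hgdef
    set x : v → ℚ := fun j => g (Finsupp.single j 1) with hxdef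
    have hgx : g = Finsupp.linearCombination ℚ x := by
      refine Finsupp.lhom_ext fun a b => ?_
      rw [Finsupp.linearCombination_single]
      have : Finsupp.single a b = b • Finsupp.single a (1 : ℚ) := by
        rw [Finsupp.smul_single, smul_eq_mul, mul_one]
      rw [this, map_smul]
    have hgs : ∀ σ : s, g (σ : v →₀ ℚ) = z ⟨τ σ, Set.mem_range_self σ⟩ := by
      intro σ
      have hw : (σ : v →₀ ℚ) ∈ LinearIndepOn.extend (v := id) hs_ind (Set.subset_univ s) :=
        LinearIndepOn.subset_extend (v := id) hs_ind _ σ.2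
      have : g (σ : v →₀ ℚ) = g (B ⟨(σ : v →₀ ℚ), hw⟩) := by
        exact congrArg g (Module.Basis.extend_apply_self hs_ind ⟨(σ : v →₀ ℚ), hw⟩).symm
      rw [this, hgdef, Module.Basis.constr_basis, hvaldef]
      simp only [dif_pos σ.2]
    have hAx : ∀ t : T, mulVecQ A x t = z t := by
      intro t
      rw [hmul, ← hgx, hrt t, hgs (e t)]
      congr 1
      exact Subtype.ext (hτe t)
    refine ⟨x, funext fun i => ?_⟩
    have : z = fun t : T => mulVecQ A x t := funext fun t => (hAx t).symm
    rw [this, key1]
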